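/- Let $\mathcal{L}$ be a caching line graph with vertex set $V(\mathcal{L}) \subseteq \mathcal{K} \times \mathcal{F}$ and edges exactly between distinct vertices sharing the first coordinate or the second coordinate (but not both). Then $\{(k_1,f_1),(k_2,f_2)\}$ is an edge of $\overline{\mathcal{L}^2}$ if and only if $k_1 \ne k_2$, $f_1 \ne f_2$, $(k_1,f_2) \notin V(\mathcal{L})$, and $(k_2,f_1) \notin V(\mathcal{L})$. -/

import Mathlib

/-- The square of a graph: vertices are adjacent iff they are distinct and joined by a
path of length at most 2 in `G`. -/
def sqGraph {α : Type*} (G : SimpleGraph α) : SimpleGraph α where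
  Adj u v := u ≠ v ∧ (G.Adj u v ∨ ∃ w, G.Adj u w ∧ G.Adj w v)
  symm := by
    constructor
    intro a b h
    refine ⟨h.1.symm, ?_⟩
    rcases h.2 with h' | ⟨w, h1, h2⟩
    · exact Or.inl h'.symm
    · exact Or.inr ⟨w, h2.symm, h1.symm⟩
  loopless := by constructor; intro a h; exact h.1 rfl

/-- Let `L` be a caching line graph with vertex set `Vset ⊆ 𝒦 × 𝒻` and
edges exactly between distinct vertices sharing the first coordinate or the second
coordinate (but not both). Then `{(k₁,f₁),(k₂,f₂)}` (with both in `Vset`) is an edge of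
the complement of `L²` iff `k₁ ≠ k₂`, `f₁ ≠ f₂`, `(k₁,f₂) ∉ Vset` and `(k₂,f₁) ∉ Vset`. -/
theorem stmt_16 (𝒦 𝒻 : Type)
    (Vset : Set (𝒦 × 𝒻))
    (L : SimpleGraph (𝒦 × 𝒻))
    (hL : ∀ u v, L.Adj u v ↔ u ≠ v ∧ u ∈ Vset ∧ v ∈ Vset ∧ (u.1 = v.1 ∨ u.2 = v.2))
    (k1 k2 : 𝒦) (f1 f2 : 𝒻)
    (h1 : (k1, f1) ∈ Vset) (h2 : (k2, f2) ∈ Vset) :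
    (sqGraph L)ᶜ.Adj (k1, f1) (k2, f2) ↔
      k1 ≠ k2 ∧ f1 ≠ f2 ∧ (k1, f2) ∉ Vset ∧ (k2, f1) ∉ Vset := by
  rw [SimpleGraph.compl_adj]
  constructor
  · rintro ⟨hne, hn⟩
    have hk : k1 ≠ k2 := by
      rintro rfl
      have hf : f1 ≠ f2 := fun h => hne (by rw [h])
      exact hn ⟨hne, Or.inl ((hL _ _).2 ⟨hne, h1, h2, Or.inl rfl⟩)⟩
    have hf : f1 ≠ f2 := by
      rintro rfl
      exact hn ⟨hne, Or.inl ((hL _ _).2 ⟨hne, h1, h2, Or.inr rfl⟩)⟩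
    refine ⟨hk, hf, ?_, ?_⟩
    · intro hm
      exact hn ⟨hne, Or.inr ⟨(k1, f2),
        (hL _ _).2 ⟨by simp [hf], h1, hm, Or.inl rfl⟩,
        (hL _ _).2 ⟨by simp [hk], hm, h2, Or.inr rfl⟩⟩⟩
    · intro hm
      exact hn ⟨hne, Or.inr ⟨(k2, f1),
        (hL _ _).2 ⟨by simp [hk], h1, hm, Or.inr rfl⟩,
        (hL _ _).2 ⟨by simp [hf], hm, h2, Or.inl rfl⟩⟩⟩
  · rintro ⟨hk, hf, hm1, hm2⟩
    refine ⟨by simp [hk], ?_⟩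
    rintro ⟨-, hadj | ⟨⟨a, b⟩, hw1, hw2⟩⟩
    · rcases ((hL _ _).1 hadj).2.2.2 with h | h
      exacts [hk h, hf h]
    · rcases ((hL _ _).1 hw1).2.2.2 with h | h <;>
        rcases ((hL _ _).1 hw2).2.2.2 with h' | h' <;>
        simp_all
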